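/- Let n ≥ 1, N ≥ 1, let G₁, G₂ : ℝⁿ → ℝ be continuously differentiable and even, and let w ∈ ℝᴺ. Let Q_i, P_i : ℝ → ℝⁿ (i = 1,…,N) be differentiable curves satisfying for all t the singular-solution dynamics Q̇_i(t) = ∑_{j=1}^N G₁(Q_i(t) − Q_j(t)) P_j(t) and Ṗ_i(t) = −∑_{j=1}^N ⟨P_i(t), P_j(t)⟩ ∇G₁(Q_i(t) − Q_j(t)) − ∑_{j=1}^N w_i w_j ∇G₂(Q_i(t) − Q_j(t)). Then the Hamiltonian H(Q(t), P(t)) = (1/2)∑_{i,j} ⟨P_i(t), P_j(t)⟩ G₁(Q_i(t) − Q_j(t)) + (1/2)∑_{i,j} w_i w_j G₂(Q_i(t) − Q_j(t)) is constant in t. -/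

import Mathlib

open MeasureTheory


open InnerProductSpace

lemma grad_neg' {E : Type*} [NormedAddCommGroup E] [InnerProductSpace ℝ E] [CompleteSpace E]
    {G : E → ℝ} (hG : Differentiable ℝ G) (he : ∀ x, G (-x) = G x) (x : E) :
    gradient G (-x) = - gradient G x := by
  have hneg : HasFDerivAt (fun y : E => -y) (-(ContinuousLinearMap.id ℝ E)) x := by
    exact (hasFDerivAt_id x).neg
  have h2 : HasFDerivAt (fun y => G (-y))
      ((fderiv ℝ G (-x)).comp (-(ContinuousLinearMap.id ℝ E))) x :=
    (hG (-x)).hasFDerivAt.comp x hneg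
  have h3 : (fun y => G (-y)) = G := funext he
  rw [h3] at h2
  have h4 := h2.unique (hG x).hasFDerivAt
  have h5 : fderiv ℝ G (-x) = - fderiv ℝ G x := by
    rw [← h4]; ext v; simp
  rw [gradient, gradient, h5, map_neg]

lemma hasDerivAt_comp_grad {E : Type*} [NormedAddCommGroup E] [InnerProductSpace ℝ E]
    [CompleteSpace E] {G : E → ℝ} (hG : Differentiable ℝ G)
    {q : ℝ → E} {q' : E} {t : ℝ} (hq : HasDerivAt q q' t) :
    HasDerivAt (fun s => G (q s)) (inner ℝ (gradient G (q t)) q' : ℝ) t := by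
  have h := ((hG (q t)).hasGradientAt.hasFDerivAt.comp_hasDerivAt t hq)
  exact h

lemma key_alg {E : Type*} [NormedAddCommGroup E] [InnerProductSpace ℝ E] {N : ℕ}
    (g1 : Fin N → Fin N → ℝ) (v1 v2 : Fin N → Fin N → E)
    (p : Fin N → E) (w : Fin N → ℝ)
    (hg1 : ∀ i j, g1 j i = g1 i j) (hv1 : ∀ i j, v1 j i = - v1 i j)
    (hv2 : ∀ i j, v2 j i = - v2 i j)
    (u b : Fin N → E)
    (hu : ∀ i, u i = ∑ j, g1 i j • p j)
    (hb : ∀ i, b i = -(∑ j, (inner ℝ (p i) (p j) : ℝ) • v1 i j)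
        - ∑ j, (w i * w j) • v2 i j) :
    (1/2 : ℝ) * ∑ i, ∑ j, (((inner ℝ (p i) (b j) : ℝ) + (inner ℝ (b i) (p j) : ℝ)) * g1 i j
        + (inner ℝ (p i) (p j) : ℝ) * (inner ℝ (v1 i j) (u i - u j) : ℝ))
      + (1/2 : ℝ) * ∑ i, ∑ j, w i * w j * (inner ℝ (v2 i j) (u i - u j) : ℝ) = 0 := by
  have hsplit : ∀ (c : Fin N → Fin N → ℝ) (v : Fin N → Fin N → E),
      ∑ i, ∑ j, c i j * (inner ℝ (v i j) (u i - u j) : ℝ)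
        = ∑ i, ∑ j, c i j * (inner ℝ (v i j) (u i) : ℝ)
          - ∑ i, ∑ j, c i j * (inner ℝ (v i j) (u j) : ℝ) := by
    intro c v
    rw [← Finset.sum_sub_distrib]
    refine Finset.sum_congr rfl fun i _ => ?_
    rw [← Finset.sum_sub_distrib]
    refine Finset.sum_congr rfl fun j _ => ?_
    rw [inner_sub_right]; ring
  -- abbreviations
  set S1 := ∑ i, ∑ j, (inner ℝ (p i) (b j) : ℝ) * g1 i j with hS1
  set S2 := ∑ i, ∑ j, (inner ℝ (b i) (p j) : ℝ) * g1 i j with hS2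
  set S3 := ∑ i, ∑ j, (inner ℝ (p i) (p j) : ℝ) * (inner ℝ (v1 i j) (u i) : ℝ) with hS3
  set S4 := ∑ i, ∑ j, (inner ℝ (p i) (p j) : ℝ) * (inner ℝ (v1 i j) (u j) : ℝ) with hS4
  set S5 := ∑ i, ∑ j, (w i * w j) * (inner ℝ (v2 i j) (u i) : ℝ) with hS5
  set S6 := ∑ i, ∑ j, (w i * w j) * (inner ℝ (v2 i j) (u j) : ℝ) with hS6
  have hfirst : ∑ i, ∑ j, (((inner ℝ (p i) (b j) : ℝ) + (inner ℝ (b i) (p j) : ℝ)) * g1 i j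
        + (inner ℝ (p i) (p j) : ℝ) * (inner ℝ (v1 i j) (u i - u j) : ℝ))
      = S1 + S2 + (S3 - S4) := by
    rw [hS1, hS2, hS3, hS4, ← hsplit, ← Finset.sum_add_distrib, ← Finset.sum_add_distrib]
    refine Finset.sum_congr rfl fun i _ => ?_
    rw [← Finset.sum_add_distrib, ← Finset.sum_add_distrib]
    refine Finset.sum_congr rfl fun j _ => ?_
    ring
  have hsecond : ∑ i, ∑ j, w i * w j * (inner ℝ (v2 i j) (u i - u j) : ℝ) = S5 - S6 := by
    rw [hS5, hS6, ← hsplit]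
  have e1 : S1 = S2 := by
    rw [hS1, hS2, Finset.sum_comm]
    refine Finset.sum_congr rfl fun i _ => Finset.sum_congr rfl fun j _ => ?_
    rw [hg1, real_inner_comm]
  have e4 : S4 = -S3 := by
    rw [hS3, hS4, Finset.sum_comm, ← Finset.sum_neg_distrib]
    refine Finset.sum_congr rfl fun i _ => ?_
    rw [← Finset.sum_neg_distrib]
    refine Finset.sum_congr rfl fun j _ => ?_
    rw [hv1, real_inner_comm (p i), inner_neg_left]; ring
  have e6 : S6 = -S5 := by
    rw [hS5, hS6, Finset.sum_comm, ← Finset.sum_neg_distrib]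
    refine Finset.sum_congr rfl fun i _ => ?_
    rw [← Finset.sum_neg_distrib]
    refine Finset.sum_congr rfl fun j _ => ?_
    rw [hv2, inner_neg_left]; ring
  have e2 : S2 = -S3 - S5 := by
    rw [hS2, hS3, hS5]
    have : ∀ i, ∑ j, (inner ℝ (b i) (p j) : ℝ) * g1 i j = inner ℝ (b i) (u i) := by
      intro i
      rw [hu, inner_sum]
      refine Finset.sum_congr rfl fun j _ => ?_
      rw [real_inner_smul_right]; ring
    rw [Finset.sum_congr rfl fun i _ => this i]
    have hbi : ∀ i, (inner ℝ (b i) (u i) : ℝ)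
        = -(∑ j, (inner ℝ (p i) (p j) : ℝ) * (inner ℝ (v1 i j) (u i) : ℝ))
          - ∑ j, w i * w j * (inner ℝ (v2 i j) (u i) : ℝ) := by
      intro i
      rw [hb, inner_sub_left, inner_neg_left, sum_inner, sum_inner]
      simp only [real_inner_smul_left]
    rw [Finset.sum_congr rfl fun i _ => hbi i, Finset.sum_sub_distrib,
      Finset.sum_neg_distrib]
  rw [hfirst, hsecond, e1, e2, e4, e6]; ring

/-- The collective Hamiltonian of the singular (point) solutions:
`H(Q,P) = ½∑ᵢⱼ ⟨Pᵢ,Pⱼ⟩ G₁(Qᵢ-Qⱼ) + ½∑ᵢⱼ wᵢwⱼ G₂(Qᵢ-Qⱼ)`. -/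
noncomputable def Ham (n N : ℕ) (G₁ G₂ : EuclideanSpace ℝ (Fin n) → ℝ) (w : Fin N → ℝ)
    (Q P : Fin N → EuclideanSpace ℝ (Fin n)) : ℝ :=
  (1 / 2) * ∑ i, ∑ j, (inner ℝ (P i) (P j) : ℝ) * G₁ (Q i - Q j)
    + (1 / 2) * ∑ i, ∑ j, w i * w j * G₂ (Q i - Q j)

/-- Along the singular-solution dynamics
`Q̇ᵢ = ∑ⱼ G₁(Qᵢ-Qⱼ)Pⱼ`, `Ṗᵢ = -∑ⱼ ⟨Pᵢ,Pⱼ⟩∇G₁(Qᵢ-Qⱼ) - ∑ⱼ wᵢwⱼ∇G₂(Qᵢ-Qⱼ)`,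
the Hamiltonian `H(Q(t),P(t))` is constant in time. -/
theorem stmt16 (n N : ℕ) (hn : 1 ≤ n) (hN : 1 ≤ N)
    (G₁ G₂ : EuclideanSpace ℝ (Fin n) → ℝ)
    (hG₁ : ContDiff ℝ 1 G₁) (hG₂ : ContDiff ℝ 1 G₂)
    (hG₁e : ∀ x, G₁ (-x) = G₁ x) (hG₂e : ∀ x, G₂ (-x) = G₂ x)
    (w : Fin N → ℝ)
    (Q P : Fin N → ℝ → EuclideanSpace ℝ (Fin n))
    (hQ : ∀ (i : Fin N) (t : ℝ),
      HasDerivAt (Q i) (∑ j, G₁ (Q i t - Q j t) • P j t) t)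
    (hP : ∀ (i : Fin N) (t : ℝ),
      HasDerivAt (P i)
        (-(∑ j, (inner ℝ (P i t) (P j t) : ℝ) • gradient G₁ (Q i t - Q j t))
          - ∑ j, (w i * w j) • gradient G₂ (Q i t - Q j t)) t) :
    ∀ t₁ t₂ : ℝ,
      Ham n N G₁ G₂ w (fun i => Q i t₁) (fun i => P i t₁) =
        Ham n N G₁ G₂ w (fun i => Q i t₂) (fun i => P i t₂) := by
  intro t₁ t₂
  have hG₁d : Differentiable ℝ G₁ := hG₁.differentiable one_ne_zero
  have hG₂d : Differentiable ℝ G₂ := hG₂.differentiable one_ne_zero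
  have main : ∀ t, HasDerivAt
      (fun s => Ham n N G₁ G₂ w (fun i => Q i s) (fun i => P i s)) 0 t := by
    intro t
    set u : Fin N → EuclideanSpace ℝ (Fin n) :=
      fun i => ∑ j, G₁ (Q i t - Q j t) • P j t with hu
    set b : Fin N → EuclideanSpace ℝ (Fin n) := fun i =>
      -(∑ j, (inner ℝ (P i t) (P j t) : ℝ) • gradient G₁ (Q i t - Q j t))
        - ∑ j, (w i * w j) • gradient G₂ (Q i t - Q j t) with hb
    have hQ' : ∀ i, HasDerivAt (Q i) (u i) t := fun i => hQ i t
    have hP' : ∀ i, HasDerivAt (P i) (b i) t := fun i => hP i t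
    have hQd : ∀ i j, HasDerivAt (fun s => Q i s - Q j s) (u i - u j) t :=
      fun i j => (hQ' i).sub (hQ' j)
    have hD : HasDerivAt (fun s => Ham n N G₁ G₂ w (fun i => Q i s) (fun i => P i s))
        ((1/2 : ℝ) * ∑ i, ∑ j, (((inner ℝ (P i t) (b j) : ℝ) + (inner ℝ (b i) (P j t) : ℝ))
              * G₁ (Q i t - Q j t)
            + (inner ℝ (P i t) (P j t) : ℝ)
              * (inner ℝ (gradient G₁ (Q i t - Q j t)) (u i - u j) : ℝ))
          + (1/2 : ℝ) * ∑ i, ∑ j,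
              w i * w j * (inner ℝ (gradient G₂ (Q i t - Q j t)) (u i - u j) : ℝ)) t := by
      unfold Ham
      exact ((HasDerivAt.fun_sum fun i _ => HasDerivAt.fun_sum fun j _ =>
          (HasDerivAt.inner ℝ (hP' i) (hP' j)).fun_mul
            (hasDerivAt_comp_grad hG₁d (hQd i j))).const_mul _).fun_add
        ((HasDerivAt.fun_sum fun i _ => HasDerivAt.fun_sum fun j _ =>
          (hasDerivAt_comp_grad hG₂d (hQd i j)).const_mul _).const_mul _)
    have hzero := key_alg (fun i j => G₁ (Q i t - Q j t))
        (fun i j => gradient G₁ (Q i t - Q j t))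
        (fun i j => gradient G₂ (Q i t - Q j t)) (fun i => P i t) w
        (fun i j => by beta_reduce; rw [← neg_sub (Q i t) (Q j t), hG₁e])
        (fun i j => by beta_reduce; rw [← neg_sub (Q i t) (Q j t), grad_neg' hG₁d hG₁e])
        (fun i j => by beta_reduce; rw [← neg_sub (Q i t) (Q j t), grad_neg' hG₂d hG₂e])
        u b (fun i => rfl) (fun i => rfl)
    rw [hzero] at hD
    exact hD
  exact is_const_of_deriv_eq_zero (fun s => (main s).differentiableAt)
    (fun s => (main s).deriv) t₁ t₂
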